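/- arXiv:2210.06845 — 2 statements merged into one kernel-verified Lean document; each statement's English description precedes it below -/
import Mathlib

section
/- Let H₁ and W be finite simple graphs such that the product H := H₁ × W is a connected non-bipartite core and is H₁-projective. Then for all distinct vertices a, b, c ∈ V(H₁), every w ∈ V(W) and every integer t ≥ 1, there exists a t-or-gadget (F,h',R) with domain ((a,b,c),w). -/
/-- The direct (tensor) product of two simple graphs. -/
def tensorProd {V₁ V₂ : Type} (H₁ : SimpleGraph V₁) (H₂ : SimpleGraph V₂) :
    SimpleGraph (V₁ × V₂) where
  Adj x y := H₁.Adj x.1 y.1 ∧ H₂.Adj x.2 y.2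
  symm := ⟨fun _ _ h => ⟨h.1.symm, h.2.symm⟩⟩
  loopless := ⟨fun _ h => H₁.loopless.irrefl _ h.1⟩

/-- The direct product of `ℓ` copies of `H₁` and one copy of `W`. -/
def powProd {V₁ VW : Type} (H₁ : SimpleGraph V₁) (W : SimpleGraph VW) (ℓ : ℕ) :
    SimpleGraph ((Fin ℓ → V₁) × VW) where
  Adj x y := (∀ i, H₁.Adj (x.1 i) (y.1 i)) ∧ W.Adj x.2 y.2
  symm := ⟨fun _ _ h => ⟨fun i => (h.1 i).symm, h.2.symm⟩⟩
  loopless := ⟨fun _ h => W.loopless.irrefl _ h.2⟩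

/-- `H₁ × W` is `H₁`-projective: for every `ℓ ≥ 1`, every `H₁`-idempotent
homomorphism `f : H₁^ℓ × W → H₁` is a projection onto one of the `H₁`-coordinates. -/
def H1Projective {V₁ VW : Type} (H₁ : SimpleGraph V₁) (W : SimpleGraph VW) : Prop :=
  ∀ ℓ : ℕ, 1 ≤ ℓ → ∀ f : powProd H₁ W ℓ →g H₁,
    (∀ (x : V₁) (y : VW), f (fun _ => x, y) = x) →
    ∃ i : Fin ℓ, ∀ z : (Fin ℓ → V₁) × VW, f z = z.1 i

/-- Existence of `t`-or-gadgets with domain `((a,b,c),w)` when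
`H = H₁ × W` is a connected non-bipartite core that is `H₁`-projective. -/
theorem stmt_2 {V₁ VW : Type} [Fintype V₁] [Fintype VW]
    (H₁ : SimpleGraph V₁) (W : SimpleGraph VW)
    (hconn : (tensorProd H₁ W).Connected)
    (hnonbip : ¬ (tensorProd H₁ W).Colorable 2)
    (hcore : ∀ f : tensorProd H₁ W →g tensorProd H₁ W, Function.Injective f)
    (hproj : H1Projective H₁ W)
    (a b c : V₁) (hab : a ≠ b) (hac : a ≠ c) (hbc : b ≠ c)
    (w : VW) (t : ℕ) (ht : 1 ≤ t) :
    ∃ (VF : Type) (_ : Fintype VF) (F : SimpleGraph VF) (V' : Set VF)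
      (h' : V' → V₁ × VW) (R : Set VF), R.ncard = t ∧
      (∀ h : F →g tensorProd H₁ W,
        (∀ (v : VF) (hv : v ∈ V'), h v = h' ⟨v, hv⟩) →
        (∀ u ∈ R, (h u).1 ∈ ({a, b, c} : Set V₁)) ∧ (∃ v ∈ R, (h v).1 = a)) ∧
      (∀ v ∈ R, ∃ h : F →g tensorProd H₁ W,
        (∀ (x : VF) (hx : x ∈ V'), h x = h' ⟨x, hx⟩) ∧
        h v = (a, w) ∧
        ∀ u ∈ R, u ≠ v → h u ∈ ({(b, w), (c, w)} : Set (V₁ × VW))) := by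
  classical
  -- Use `F = H₁^t × W` itself, pin the diagonal, and take as `R` the vertices
  -- `(e j, w)` where `e j` is `a` at position `j` and `b` elsewhere.
  set e : Fin t → Fin t → V₁ := fun j i => if i = j then a else b with he
  set r : Fin t → (Fin t → V₁) × VW := fun j => (e j, w) with hr
  have hrinj : Function.Injective r := by
    intro j k hjk
    by_contra hne
    have h1 : e j j = a := by simp [he]
    have h2 : e k j = b := by simp [he, hne]
    have : e j = e k := congrArg Prod.fst hjk
    rw [this, h2] at h1
    exact hab h1.symm
  refine ⟨(Fin t → V₁) × VW, inferInstance, powProd H₁ W t,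
    Set.range (fun xy : V₁ × VW => ((fun _ => xy.1), xy.2)),
    fun q => (q.val.1 ⟨0, ht⟩, q.val.2), Set.range r, ?_, ?_, ?_⟩
  · -- cardinality of R
    have : (Set.range r).ncard = Nat.card (Set.range r) := rfl
    rw [this, Nat.card_range_of_injective hrinj, Nat.card_eq_fintype_card,
      Fintype.card_fin]
  · -- (O1)
    intro h hpin
    -- the first coordinate of `h` is an idempotent homomorphism to `H₁`
    let f : powProd H₁ W t →g H₁ :=
      { toFun := fun z => (h z).1
        map_rel' := fun hadj => (h.map_rel' hadj).1 }
    have hid : ∀ (x : V₁) (y : VW), f (fun _ => x, y) = x := by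
      intro x y
      have hmem : ((fun _ => x, y) : (Fin t → V₁) × VW) ∈
          Set.range (fun xy : V₁ × VW => ((fun _ => xy.1), xy.2)) := ⟨(x, y), rfl⟩
      have := hpin _ hmem
      show (h (fun _ => x, y)).1 = x
      rw [this]
    obtain ⟨i, hi⟩ := hproj t ht f hid
    constructor
    · rintro u ⟨j, rfl⟩
      have : (h (r j)).1 = e j i := hi (r j)
      rw [this]
      by_cases hji : i = j
      · simp [he, hji]
      · simp [he, hji]
    · refine ⟨r i, ⟨i, rfl⟩, ?_⟩
      have : (h (r i)).1 = e i i := hi (r i)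
      rw [this]
      simp [he]
  · -- (O2)
    rintro v ⟨j, rfl⟩
    refine ⟨{ toFun := fun z => (z.1 j, z.2)
              map_rel' := fun hadj => ⟨hadj.1 j, hadj.2⟩ }, ?_, ?_, ?_⟩
    · rintro x ⟨⟨x₀, y⟩, rfl⟩
      rfl
    · show (e j j, w) = (a, w)
      simp [he]
    · rintro u ⟨k, rfl⟩ hne
      have hkj : k ≠ j := fun hkj => hne (by rw [hkj])
      show (e k j, w) ∈ ({(b, w), (c, w)} : Set (V₁ × VW))
      have : e k j = b := by simp [he, hkj.symm]
      rw [this]; left; rfl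
end

section
/- Let H₁ and H₂ be simple graphs and let H = H₁ × H₂ be their direct product. Then 𝒮(H) = {S₁ × S₂ : S₁ ∈ 𝒮(H₁), S₂ ∈ 𝒮(H₂)}, i.e., the signature sets of H are exactly the Cartesian products of a signature set of H₁ with a signature set of H₂. -/
/-- The signature set `S(T)` of a set `T` of vertices of `H`: the set of common
neighbors of all vertices of `T`. -/
def sigSet {V : Type} (H : SimpleGraph V) (T : Set V) : Set V :=
  ⋂ t ∈ T, H.neighborSet t

/-- The family `𝒮(H)` of all nonempty signature sets of nonempty vertex sets. -/
def sigFamily {V : Type} (H : SimpleGraph V) : Set (Set V) :=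
  {S | S.Nonempty ∧ ∃ T : Set V, T.Nonempty ∧ sigSet H T = S}

/-- The signature number `s(H)`, i.e. the cardinality of `𝒮(H)`. -/
noncomputable def sigNum {V : Type} (H : SimpleGraph V) : ℕ := (sigFamily H).ncard

lemma sigSet_tensor {V₁ V₂ : Type} (H₁ : SimpleGraph V₁) (H₂ : SimpleGraph V₂)
    (T : Set (V₁ × V₂)) :
    sigSet (tensorProd H₁ H₂) T
      = sigSet H₁ (Prod.fst '' T) ×ˢ sigSet H₂ (Prod.snd '' T) := by
  ext ⟨x, y⟩
  simp only [sigSet, Set.mem_iInter, SimpleGraph.mem_neighborSet, Set.mem_prod, Set.mem_image]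
  constructor
  · intro h
    constructor <;> · rintro a ⟨t, ht, rfl⟩
                      first
                        | exact (h t ht).1
                        | exact (h t ht).2
  · rintro ⟨h1, h2⟩ t ht
    exact ⟨h1 t.1 ⟨t, ht, rfl⟩, h2 t.2 ⟨t, ht, rfl⟩⟩

/-- `𝒮(H₁ × H₂) = {S₁ × S₂ : S₁ ∈ 𝒮(H₁), S₂ ∈ 𝒮(H₂)}`. -/
theorem stmt_17 {V₁ V₂ : Type} (H₁ : SimpleGraph V₁) (H₂ : SimpleGraph V₂) :
    sigFamily (tensorProd H₁ H₂) =
      {S : Set (V₁ × V₂) | ∃ S₁ ∈ sigFamily H₁, ∃ S₂ ∈ sigFamily H₂, S = S₁ ×ˢ S₂} := by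
  ext S
  constructor
  · rintro ⟨hne, T, hT, rfl⟩
    rw [sigSet_tensor] at hne ⊢
    obtain ⟨⟨x, y⟩, hx, hy⟩ := hne
    exact ⟨_, ⟨⟨x, hx⟩, _, hT.image _, rfl⟩, _, ⟨⟨y, hy⟩, _, hT.image _, rfl⟩, rfl⟩
  · rintro ⟨S₁, ⟨hne₁, T₁, hT₁, rfl⟩, S₂, ⟨hne₂, T₂, hT₂, rfl⟩, rfl⟩
    refine ⟨hne₁.prod hne₂, T₁ ×ˢ T₂, hT₁.prod hT₂, ?_⟩
    rw [sigSet_tensor, Set.fst_image_prod _ hT₂, Set.snd_image_prod hT₁]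
end
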